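/- Let G be an abelian group. The function f : G → ℂ is a local polynomial if and only if for each positive integer t and each choice of elements g_1, g_2, …, g_t in G there exist natural numbers n_1, …, n_t such that Δ_{g_i}^{n_i+1} f(x) = 0 holds for i = 1, 2, …, t and for all x in the subgroup of G generated by g_1, …, g_t. -/

import Mathlib

/-- The forward difference operator: `(Δ_h f)(x) = f(x + h) - f(x)`. -/
def fdiff {G M : Type*} [Add G] [Sub M] (h : G) (f : G → M) : G → M :=
  fun x => f (x + h) - f x

/-- `p : H → ℂ` is a polynomial: there are additive functions `a_1, …, a_n : H → ℂ`
and a complex polynomial `P` in `n` variables with `p x = P (a_1 x, …, a_n x)`. -/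
def IsPolynomialC {H : Type*} [Add H] (p : H → ℂ) : Prop :=
  ∃ (n : ℕ) (a : Fin n → H → ℂ) (P : MvPolynomial (Fin n) ℂ),
    (∀ i x y, a i (x + y) = a i x + a i y) ∧
    ∀ x, p x = MvPolynomial.eval (fun i => a i x) P

/-- `f : G → ℂ` is a local polynomial: its restriction to every finitely generated
subgroup of `G` is a polynomial. -/
def IsLocalPolynomial {G : Type*} [AddCommGroup G] (f : G → ℂ) : Prop :=
  ∀ H : AddSubgroup G, H.FG → IsPolynomialC (fun x : H => f x)


section Basic
variable {G : Type*} [AddCommGroup G]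

lemma fdiff_comm (a b : G) (f : G → ℂ) : fdiff a (fdiff b f) = fdiff b (fdiff a f) := by
  funext x
  simp only [fdiff]
  rw [add_right_comm x b a]
  ring

lemma fdiff_commute (a b : G) : Function.Commute (fdiff a) (fdiff b : (G → ℂ) → (G → ℂ)) :=
  fun f => fdiff_comm a b f

lemma fdiff_iterate_comm (a b : G) (m j : ℕ) (f : G → ℂ) :
    (fdiff a)^[m] ((fdiff b)^[j] f) = (fdiff b)^[j] ((fdiff a)^[m] f) :=
  ((fdiff_commute a b).iterate_left m).iterate_right j f

lemma fdiff_iterate_zero_on {H : AddSubgroup G} {f : G → ℂ} (hf : ∀ x ∈ H, f x = 0)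
    {b : G} (hb : b ∈ H) (j : ℕ) : ∀ x ∈ H, (fdiff b)^[j] f x = 0 := by
  induction j generalizing f with
  | zero => exact hf
  | succ j ih =>
    intro x hx
    rw [Function.iterate_succ_apply]
    refine ih (fun y hy => ?_) x hx
    simp [fdiff, hf _ (H.add_mem hy hb), hf _ hy]

lemma fdiff_iterate_restrict {H : AddSubgroup G} (m : ℕ) (f : G → ℂ) (h : G) (hh : h ∈ H)
    (x : G) (hx : x ∈ H) :
    (fdiff h)^[m] f x = (fdiff (⟨h, hh⟩ : H))^[m] (fun y : H => f y) ⟨x, hx⟩ := by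
  induction m generalizing f with
  | zero => rfl
  | succ m ih =>
    rw [Function.iterate_succ_apply, Function.iterate_succ_apply, ih (fdiff h f)]
    congr 1

end Basic

noncomputable def cpoch (j : ℕ) (z : ℂ) : ℂ :=
  (j.factorial : ℂ)⁻¹ * ∏ i ∈ Finset.range j, (z - i)

lemma cpoch_zero (z : ℂ) : cpoch 0 z = 1 := by simp [cpoch]

lemma cpoch_succ_zero (j : ℕ) : cpoch (j + 1) (0 : ℂ) = 0 := by
  rw [cpoch, Finset.prod_eq_zero (Finset.mem_range.2 (Nat.succ_pos j)), mul_zero]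
  simp

lemma cpoch_step (j : ℕ) (z : ℂ) : cpoch (j + 1) (z + 1) - cpoch (j + 1) z = cpoch j z := by
  have h1 : ∏ i ∈ Finset.range (j + 1), (z + 1 - i) = (∏ i ∈ Finset.range j, (z - i)) * (z + 1) := by
    rw [Finset.prod_range_succ']
    congr 1
    · refine Finset.prod_congr rfl fun i _ => ?_
      push_cast; ring
    · simp
  have h2 : ∏ i ∈ Finset.range (j + 1), (z - i) = (∏ i ∈ Finset.range j, (z - i)) * (z - j) :=
    Finset.prod_range_succ _ _
  have hj : (j.factorial : ℂ) ≠ 0 := Nat.cast_ne_zero.2 j.factorial_ne_zero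
  have hj1 : ((j : ℂ) + 1) ≠ 0 := by
    have h : ((j + 1 : ℕ) : ℂ) ≠ 0 := Nat.cast_ne_zero.2 (Nat.succ_ne_zero j)
    push_cast at h
    exact h
  rw [cpoch, cpoch, cpoch, h1, h2, Nat.factorial_succ]
  push_cast
  field_simp
  ring

lemma int_periodic_const (F : ℤ → ℂ) (h : ∀ k, F (k + 1) = F k) : ∀ k, F k = F 0 := by
  intro k
  induction k using Int.induction_on with
  | zero => rfl
  | succ k ih => rw [h, ih]
  | pred k ih =>
    have h2 : F (-(k : ℤ) - 1) = F (-(k : ℤ)) := by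
      have := h (-(k : ℤ) - 1)
      rw [show -(k : ℤ) - 1 + 1 = -(k : ℤ) by ring] at this
      exact this.symm
    rw [h2, ih]

lemma newton (n : ℕ) : ∀ F : ℤ → ℂ, (∀ k, (fdiff (1 : ℤ))^[n + 1] F k = 0) →
    ∀ k : ℤ, F k = ∑ j ∈ Finset.range (n + 1), cpoch j (k : ℂ) * (fdiff (1 : ℤ))^[j] F 0 := by
  induction n with
  | zero =>
    intro F hF k
    simp only [zero_add, Finset.range_one, Finset.sum_singleton, Function.iterate_zero, id_eq,
      cpoch_zero, one_mul]
    exact int_periodic_const F (fun k => sub_eq_zero.1 (hF k)) k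
  | succ n ih =>
    intro F hF k
    have h' : ∀ k, (fdiff (1 : ℤ))^[n + 1] (fdiff (1 : ℤ) F) k = 0 := fun k => by
      rw [← Function.iterate_succ_apply]
      exact hF k
    have ihF' := ih (fdiff (1 : ℤ) F) h'
    have hstep : ∀ m : ℤ,
        (∑ j ∈ Finset.range (n + 2), cpoch j ((m : ℂ) + 1) * (fdiff (1 : ℤ))^[j] F 0)
          - (∑ j ∈ Finset.range (n + 2), cpoch j (m : ℂ) * (fdiff (1 : ℤ))^[j] F 0)
          = fdiff (1 : ℤ) F m := by
      intro m
      rw [← Finset.sum_sub_distrib]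
      have e : ∀ j ∈ Finset.range (n + 2),
          cpoch j ((m : ℂ) + 1) * (fdiff (1 : ℤ))^[j] F 0
            - cpoch j (m : ℂ) * (fdiff (1 : ℤ))^[j] F 0
          = (cpoch j ((m : ℂ) + 1) - cpoch j (m : ℂ)) * (fdiff (1 : ℤ))^[j] F 0 :=
        fun j _ => by ring
      rw [Finset.sum_congr rfl e, Finset.sum_range_succ']
      simp only [cpoch_zero, sub_self, zero_mul, add_zero]
      rw [ihF' m]
      refine Finset.sum_congr rfl fun j _ => ?_
      rw [cpoch_step, Function.iterate_succ_apply]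
    have hG0 : (∑ j ∈ Finset.range (n + 2), cpoch j (((0 : ℤ) : ℂ)) * (fdiff (1 : ℤ))^[j] F 0)
        = F 0 := by
      rw [Finset.sum_eq_single_of_mem 0 (Finset.mem_range.2 (Nat.succ_pos _))]
      · simp [cpoch_zero]
      · intro j _ hj
        obtain ⟨j', rfl⟩ := Nat.exists_eq_succ_of_ne_zero hj
        rw [show ((0 : ℤ) : ℂ) = 0 by simp, cpoch_succ_zero, zero_mul]
    have hper : ∀ m : ℤ,
        F (m + 1) - (∑ j ∈ Finset.range (n + 2), cpoch j (((m + 1 : ℤ) : ℂ)) * (fdiff (1 : ℤ))^[j] F 0)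
          = F m - ∑ j ∈ Finset.range (n + 2), cpoch j ((m : ℂ)) * (fdiff (1 : ℤ))^[j] F 0 := by
      intro m
      have hc : ((m + 1 : ℤ) : ℂ) = (m : ℂ) + 1 := by push_cast; ring
      rw [hc]
      have h1 := hstep m
      have h2 : F (m + 1) - F m = fdiff (1 : ℤ) F m := rfl
      linear_combination h2 - h1
    have hcn := int_periodic_const
      (fun m : ℤ => F m - ∑ j ∈ Finset.range (n + 2), cpoch j ((m : ℂ)) * (fdiff (1 : ℤ))^[j] F 0)
      (fun m => hper m) k
    rw [hG0] at hcn
    linear_combination hcn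

open MvPolynomial


lemma my_eval_bind₁ {σ : Type*} (g : σ → ℂ) (h : σ → MvPolynomial σ ℂ)
    (φ : MvPolynomial σ ℂ) :
    eval g (bind₁ h φ) = eval (fun i => eval g (h i)) φ :=
  eval₂Hom_bind₁ (RingHom.id ℂ) g h φ

lemma shift_monomial {nn : ℕ} (v : Fin nn → ℂ) (α : Fin nn →₀ ℕ) :
    ∃ R : MvPolynomial (Fin nn) ℂ,
      bind₁ (fun i => X i + C (v i)) (monomial α (1 : ℂ)) = monomial α 1 + R ∧
      (R = 0 ∨ R.totalDegree + 1 ≤ α.sum fun _ e => e) := by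
  induction α using Finsupp.induction with
  | zero => refine ⟨0, by simp, Or.inl rfl⟩
  | single_add i b β hiβ hb ih =>
    obtain ⟨Rβ, hβ, hdβ⟩ := ih
    have hb1 : 1 ≤ b := Nat.one_le_iff_ne_zero.2 hb
    set R1 : MvPolynomial (Fin nn) ℂ :=
      ∑ j ∈ Finset.range b, X i ^ j * C (v i) ^ (b - j) * (b.choose j : MvPolynomial (Fin nn) ℂ)
      with hR1def
    have hpow : (X i + C (v i)) ^ b = X i ^ b + R1 := by
      rw [add_pow, Finset.sum_range_succ, hR1def]
      simp [Nat.sub_self]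
      ring
    have hdR1 : R1.totalDegree + 1 ≤ b := by
      have : R1.totalDegree < b := by
        refine lt_of_le_of_lt (totalDegree_finset_sum _ _) ?_
        rw [Finset.sup_lt_iff (by exact_mod_cast hb1 : (⊥ : ℕ) < b)]
        intro j hj
        refine lt_of_le_of_lt ?_ (Finset.mem_range.1 hj)
        calc (X i ^ j * C (v i) ^ (b - j) * (b.choose j : MvPolynomial (Fin nn) ℂ)).totalDegree
            ≤ (X i ^ j * C (v i) ^ (b - j)).totalDegree
              + (b.choose j : MvPolynomial (Fin nn) ℂ).totalDegree := totalDegree_mul _ _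
          _ ≤ ((X i ^ j : MvPolynomial (Fin nn) ℂ).totalDegree
              + (C (v i) ^ (b - j) : MvPolynomial (Fin nn) ℂ).totalDegree)
              + (b.choose j : MvPolynomial (Fin nn) ℂ).totalDegree := by
                exact Nat.add_le_add_right (totalDegree_mul _ _) _
          _ ≤ j := by
                rw [← C_eq_coe_nat, totalDegree_C, totalDegree_X_pow]
                have h1 : (C (v i) ^ (b - j) : MvPolynomial (Fin nn) ℂ).totalDegree ≤ 0 := by
                  refine le_trans (totalDegree_pow _ _) ?_
                  simp [totalDegree_C]
                omega
      omega
    refine ⟨X i ^ b * Rβ + R1 * monomial β 1 + R1 * Rβ, ?_, ?_⟩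
    · rw [show monomial (Finsupp.single i b + β) (1 : ℂ) = X i ^ b * monomial β 1 by
        rw [X_pow_eq_monomial, monomial_mul, one_mul]]
      rw [map_mul, hβ, map_pow, bind₁_X_right, hpow]
      ring
    · right
      have hsum : ((Finsupp.single i b + β).sum fun _ e => e) = b + (β.sum fun _ e => e) := by
        rw [Finsupp.sum_add_index' (fun _ => rfl) (fun _ _ _ => rfl),
          Finsupp.sum_single_index rfl]
      rw [hsum]
      have hmonβ : (monomial β (1 : ℂ)).totalDegree = β.sum fun _ e => e :=
        totalDegree_monomial _ one_ne_zero
      have hXb : (X i ^ b : MvPolynomial (Fin nn) ℂ).totalDegree = b := totalDegree_X_pow _ _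
      have e1 : (X i ^ b * Rβ).totalDegree + 1 ≤ b + (β.sum fun _ e => e) := by
        rcases hdβ with h0 | hdeg
        · rw [h0, mul_zero]
          simp only [totalDegree_zero]
          omega
        · have := totalDegree_mul (X i ^ b : MvPolynomial (Fin nn) ℂ) Rβ
          omega
      have e2 : (R1 * monomial β 1).totalDegree + 1 ≤ b + (β.sum fun _ e => e) := by
        have := totalDegree_mul R1 (monomial β (1 : ℂ))
        omega
      have e3 : (R1 * Rβ).totalDegree + 1 ≤ b + (β.sum fun _ e => e) := by
        rcases hdβ with h0 | hdeg
        · rw [h0, mul_zero]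
          simp only [totalDegree_zero]
          omega
        · have := totalDegree_mul R1 Rβ
          omega
      have t1 := totalDegree_add (X i ^ b * Rβ + R1 * monomial β 1) (R1 * Rβ)
      have t2 := totalDegree_add (X i ^ b * Rβ) (R1 * monomial β 1)
      omega

lemma shift_sub_totalDegree {nn : ℕ} (v : Fin nn → ℂ) (P : MvPolynomial (Fin nn) ℂ) (d : ℕ)
    (hP : P.totalDegree ≤ d + 1) :
    (bind₁ (fun i => X i + C (v i)) P - P).totalDegree ≤ d := by
  conv_lhs => rw [← support_sum_monomial_coeff P]
  rw [map_sum, ← Finset.sum_sub_distrib]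
  refine le_trans (totalDegree_finset_sum _ _) (Finset.sup_le ?_)
  intro α hα
  have hαd : (α.sum fun _ e => e) ≤ d + 1 := le_trans (le_totalDegree hα) hP
  obtain ⟨R, hR, hdR⟩ := shift_monomial v α
  have hmono : monomial α (coeff α P) = C (coeff α P) * monomial α 1 := by
    rw [C_mul_monomial, mul_one]
  rw [hmono, map_mul, bind₁_C_right, hR]
  rw [show C (coeff α P) * (monomial α 1 + R) - C (coeff α P) * monomial α 1
      = C (coeff α P) * R by ring]
  rcases hdR with h0 | hdeg
  · rw [h0, mul_zero]
    simp
  · have := totalDegree_mul (C (coeff α P)) R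
    rw [totalDegree_C] at this
    omega

section Fwd
variable {H : Type*} [AddCommGroup H] {nn : ℕ}

lemma fdiff_eval_eq (a : Fin nn → H → ℂ) (hadd : ∀ i x y, a i (x + y) = a i x + a i y)
    (P : MvPolynomial (Fin nn) ℂ) (h : H) :
    fdiff h (fun y => eval (fun i => a i y) P)
      = fun y => eval (fun i => a i y) (bind₁ (fun i => X i + C (a i h)) P - P) := by
  funext y
  show eval (fun i => a i (y + h)) P - eval (fun i => a i y) P = _
  rw [map_sub]
  congr 1
  rw [my_eval_bind₁]
  have e : (fun i => eval (fun i => a i y) (X i + C (a i h))) = fun i => a i (y + h) := by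
    funext i
    simp [hadd]
  rw [e]

lemma fdiff_iterate_eval (a : Fin nn → H → ℂ) (hadd : ∀ i x y, a i (x + y) = a i x + a i y) :
    ∀ (d : ℕ) (P : MvPolynomial (Fin nn) ℂ), P.totalDegree ≤ d → ∀ (h : H) (x : H),
      (fdiff h)^[d + 1] (fun y => eval (fun i => a i y) P) x = 0 := by
  intro d
  induction d with
  | zero =>
    intro P hP h x
    have h0 := (totalDegree_eq_zero_iff _ P).1 (Nat.le_zero.1 hP)
    have key : ∀ y z : Fin nn → ℂ, eval y P = eval z P := by
      intro y z
      rw [eval_eq, eval_eq]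
      refine Finset.sum_congr rfl fun α hα => ?_
      have e : ∀ w : Fin nn → ℂ, ∏ i ∈ α.support, w i ^ α i = 1 := fun w =>
        Finset.prod_eq_one fun i _ => by rw [h0 α hα i, pow_zero]
      rw [e y, e z]
    rw [Function.iterate_one]
    exact sub_eq_zero.2 (key _ _)
  | succ d ihd =>
    intro P hP h x
    rw [Function.iterate_succ_apply, fdiff_eval_eq a hadd P h]
    exact ihd _ (shift_sub_totalDegree _ P d hP) h x

end Fwd

lemma mv_int_zero : ∀ (t : ℕ) (P : MvPolynomial (Fin t) ℂ),
    (∀ k : Fin t → ℤ, eval (fun i => (k i : ℂ)) P = 0) → P = 0 := by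
  intro t
  induction t with
  | zero =>
    intro P hP
    obtain ⟨c, rfl⟩ := C_surjective (Fin 0) P
    have := hP 0
    rw [eval_C] at this
    rw [this, map_zero]
  | succ t ih =>
    intro P hP
    have key : ∀ j : ℕ, ((finSuccEquiv ℂ t) P).coeff j = 0 := by
      intro j
      apply ih
      intro k
      have hroots : ∀ y : ℤ, Polynomial.IsRoot
          (Polynomial.map (eval fun i => (k i : ℂ)) ((finSuccEquiv ℂ t) P)) (y : ℂ) := by
        intro y
        have := hP (Fin.cons y k)
        rw [show (fun i => ((Fin.cons y k : Fin (t+1) → ℤ) i : ℂ))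
            = Fin.cons (y : ℂ) (fun i => (k i : ℂ)) by
          funext i
          refine Fin.cases ?_ ?_ i <;> simp] at this
        rw [eval_eq_eval_mv_eval'] at this
        exact this
      have hzero : Polynomial.map (eval fun i => (k i : ℂ)) ((finSuccEquiv ℂ t) P) = 0 := by
        refine Polynomial.eq_zero_of_infinite_isRoot _ ?_
        refine Set.Infinite.mono ?_ (Set.infinite_range_of_injective
          (fun a b hab => by exact_mod_cast hab : Function.Injective (Int.cast : ℤ → ℂ)))
        rintro z ⟨y, rfl⟩
        exact hroots y
      have := congrArg (fun q => Polynomial.coeff q j) hzero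
      simpa [Polynomial.coeff_map] using this
    have hQ : (finSuccEquiv ℂ t) P = 0 := Polynomial.ext fun j => by simp [key j]
    have := congrArg (finSuccEquiv ℂ t).symm hQ
    simpa using this

lemma reverse_main {G : Type*} [AddCommGroup G] :
    ∀ (t : ℕ) (f : G → ℂ) (g : Fin t → G) (n : Fin t → ℕ),
      (∀ i, ∀ x ∈ AddSubgroup.closure (Set.range g), (fdiff (g i))^[n i + 1] f x = 0) →
      ∃ P : MvPolynomial (Fin t) ℂ, ∀ k : Fin t → ℤ,
        f (∑ i, k i • g i) = eval (fun i => (k i : ℂ)) P := by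
  intro t
  induction t with
  | zero =>
    intro f g n _
    exact ⟨C (f 0), fun k => by simp⟩
  | succ t ih =>
    intro f g n hyp
    have hsub : AddSubgroup.closure (Set.range (g ∘ Fin.succ))
        ≤ AddSubgroup.closure (Set.range g) := by
      apply AddSubgroup.closure_mono
      rintro _ ⟨i, rfl⟩
      exact ⟨i.succ, rfl⟩
    have hg0 : g 0 ∈ AddSubgroup.closure (Set.range g) := AddSubgroup.subset_closure ⟨0, rfl⟩
    have hstep : ∀ j : ℕ, ∃ P : MvPolynomial (Fin t) ℂ, ∀ k : Fin t → ℤ,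
        (fdiff (g 0))^[j] f (∑ i, k i • g (Fin.succ i)) = eval (fun i => (k i : ℂ)) P := by
      intro j
      refine ih ((fdiff (g 0))^[j] f) (g ∘ Fin.succ) (fun i => n i.succ) ?_
      intro i x hx
      show (fdiff (g (Fin.succ i)))^[n i.succ + 1] ((fdiff (g 0))^[j] f) x = 0
      rw [fdiff_iterate_comm]
      exact fdiff_iterate_zero_on (fun y hy => hyp i.succ y hy) hg0 j x (hsub hx)
    choose Ps hPs using hstep
    refine ⟨∑ j ∈ Finset.range (n 0 + 1),
      (C ((j.factorial : ℂ)⁻¹) * ∏ i ∈ Finset.range j, (X 0 - C (i : ℂ)))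
        * rename Fin.succ (Ps j), ?_⟩
    intro k
    set y := ∑ i : Fin t, k (Fin.succ i) • g (Fin.succ i) with hy
    have htrans : ∀ (j : ℕ) (f' : G → ℂ) (m : ℤ),
        (fdiff (1 : ℤ))^[j] (fun m : ℤ => f' (m • g 0 + y)) m
          = (fdiff (g 0))^[j] f' (m • g 0 + y) := by
      intro j
      induction j with
      | zero => intro f' m; rfl
      | succ j ihj =>
        intro f' m
        rw [Function.iterate_succ_apply, Function.iterate_succ_apply]
        have e : fdiff (1 : ℤ) (fun m : ℤ => f' (m • g 0 + y))
            = fun m : ℤ => (fdiff (g 0) f') (m • g 0 + y) := by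
          funext m'
          show f' ((m' + 1) • g 0 + y) - f' (m' • g 0 + y)
            = f' (m' • g 0 + y + g 0) - f' (m' • g 0 + y)
          rw [show (m' + 1) • g 0 + y = m' • g 0 + y + g 0 by rw [add_zsmul, one_zsmul]; abel]
        rw [e]
        exact ihj (fdiff (g 0) f') m
    have hmem : ∀ m : ℤ, m • g 0 + y ∈ AddSubgroup.closure (Set.range g) := by
      intro m
      refine AddSubgroup.add_mem _ (AddSubgroup.zsmul_mem _ hg0 m) ?_
      refine AddSubgroup.sum_mem _ fun i _ => AddSubgroup.zsmul_mem _ ?_ _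
      exact AddSubgroup.subset_closure ⟨i.succ, rfl⟩
    have hvan : ∀ m : ℤ, (fdiff (1 : ℤ))^[n 0 + 1] (fun m : ℤ => f (m • g 0 + y)) m = 0 := by
      intro m
      rw [htrans]
      exact hyp 0 _ (hmem m)
    have hNewton : f (k 0 • g 0 + y) = ∑ j ∈ Finset.range (n 0 + 1),
        cpoch j ((k 0 : ℤ) : ℂ) * (fdiff (1 : ℤ))^[j] (fun m : ℤ => f (m • g 0 + y)) 0 :=
      newton (n 0) (fun m : ℤ => f (m • g 0 + y)) hvan (k 0)
    rw [Fin.sum_univ_succ]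
    rw [show (∑ i : Fin t, k i.succ • g i.succ) = y from rfl, hNewton, map_sum]
    refine Finset.sum_congr rfl fun j hj => ?_
    rw [htrans j f 0]
    have hterm : (fdiff (g 0))^[j] f ((0 : ℤ) • g 0 + y) = eval (fun i => ((k i.succ : ℤ) : ℂ)) (Ps j) := by
      rw [zero_zsmul, zero_add, hy]
      exact hPs j (fun i => k i.succ)
    rw [hterm]
    rw [map_mul, map_mul, eval_C, eval_rename]
    rw [show ((fun i => ((k i : ℤ) : ℂ)) ∘ Fin.succ) = fun i => ((k i.succ : ℤ) : ℂ) from rfl]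
    congr 1
    rw [cpoch]
    congr 1
    rw [map_prod]
    refine Finset.prod_congr rfl fun i _ => ?_
    rw [map_sub, eval_X, eval_C]

lemma step1 {T : ℕ} (P : MvPolynomial (Fin T) ℂ) (m : Fin T → ℤ)
    (h : ∀ k : Fin T → ℤ, eval (fun i => ((k i + m i : ℤ) : ℂ)) P = eval (fun i => (k i : ℂ)) P) :
    ∀ z : Fin T → ℂ, eval (fun i => z i + (m i : ℂ)) P = eval z P := by
  have hD : bind₁ (fun i => X i + C ((m i : ℂ))) P - P = 0 := by
    apply mv_int_zero
    intro k
    rw [map_sub, my_eval_bind₁]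
    have e : (fun i => eval (fun i => (k i : ℂ)) (X i + C ((m i : ℂ))))
        = fun i => ((k i + m i : ℤ) : ℂ) := by
      funext i
      push_cast
      simp
    rw [e, h k, sub_self]
  intro z
  have h2 := congrArg (eval z) hD
  rw [map_sub, my_eval_bind₁, map_zero, sub_eq_zero] at h2
  simp only [map_add, eval_X, eval_C] at h2
  exact h2

lemma invariant_smul {T : ℕ} (P : MvPolynomial (Fin T) ℂ) (w : Fin T → ℂ)
    (hw : ∀ z : Fin T → ℂ, eval (fun i => z i + w i) P = eval z P) (c : ℂ) :
    ∀ z : Fin T → ℂ, eval (fun i => z i + c * w i) P = eval z P := by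
  have hneg : ∀ z : Fin T → ℂ, eval (fun i => z i - w i) P = eval z P := by
    intro z
    have := hw (fun i => z i - w i)
    rw [show (fun i => (fun i => z i - w i) i + w i) = z by funext i; ring] at this
    rw [← this]
  have hint : ∀ (j : ℤ) (z : Fin T → ℂ), eval (fun i => z i + (j : ℂ) * w i) P = eval z P := by
    intro j
    induction j using Int.induction_on with
    | zero => intro z; simp
    | succ j ihj =>
      intro z
      have e : (fun i => z i + ((j : ℤ) + 1 : ℤ) * w i)
          = fun i => (fun i => z i + w i) i + (((j : ℤ) : ℂ)) * w i := by
        funext i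
        push_cast
        ring
      rw [e, ihj, hw]
    | pred j ihj =>
      intro z
      have e : (fun i => z i + ((-(j : ℤ) - 1 : ℤ) : ℂ) * w i)
          = fun i => (fun i => z i - w i) i + ((-(j : ℤ) : ℤ) : ℂ) * w i := by
        funext i
        push_cast
        ring
      rw [e, ihj, hneg]
  intro z
  set q : Polynomial ℂ :=
    MvPolynomial.aeval (fun i => Polynomial.C (z i) + Polynomial.C (w i) * Polynomial.X) P
    with hq
  have hqe : ∀ s : ℂ, q.eval s = eval (fun i => z i + w i * s) P := by
    intro s
    have h1 : q.eval s = Polynomial.aeval s q := by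
      rw [Polynomial.coe_aeval_eq_eval]
    have h2 := MvPolynomial.comp_aeval
      (φ := Polynomial.aeval s (R := ℂ))
      (f := fun i : Fin T => Polynomial.C (z i) + Polynomial.C (w i) * Polynomial.X)
    have h3 := congrArg (fun ψ => ψ P) h2
    simp only [AlgHom.comp_apply] at h3
    rw [h1, hq, h3]
    have h4 : (fun i => Polynomial.aeval s (Polynomial.C (z i) + Polynomial.C (w i) * Polynomial.X))
        = fun i => z i + w i * s := by
      funext i
      simp
    rw [h4]
    have h5 := DFunLike.congr_fun
      (MvPolynomial.coe_aeval_eq_eval (f := fun i => z i + w i * s)) P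
    exact h5
  have hroots : q - Polynomial.C (eval z P) = 0 := by
    apply Polynomial.eq_zero_of_infinite_isRoot
    refine Set.Infinite.mono ?_ (Set.infinite_range_of_injective
      (fun a b hab => by exact_mod_cast hab : Function.Injective (Int.cast : ℤ → ℂ)))
    rintro x ⟨j, rfl⟩
    show (q - Polynomial.C (eval z P)).eval ((j : ℤ) : ℂ) = 0
    rw [Polynomial.eval_sub, Polynomial.eval_C, hqe]
    rw [show (fun i => z i + w i * ((j : ℤ) : ℂ)) = fun i => z i + ((j : ℤ) : ℂ) * w i by
      funext i; ring]
    rw [hint j z, sub_self]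
  have : q.eval c = eval z P := by
    have h6 : q = Polynomial.C (eval z P) := by
      have := sub_eq_zero.1 hroots
      exact this
    rw [h6, Polynomial.eval_C]
  rw [show (fun i => z i + c * w i) = fun i => z i + w i * c by funext i; ring]
  rw [← hqe c, this]

lemma forward_dir {G : Type*} [AddCommGroup G] (f : G → ℂ) (hf : IsLocalPolynomial f) :
    ∀ t : ℕ, 0 < t → ∀ g : Fin t → G, ∃ n : Fin t → ℕ, ∀ i : Fin t,
      ∀ x ∈ AddSubgroup.closure (Set.range g), (fdiff (g i))^[n i + 1] f x = 0 := by
  intro t _ g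
  have hFG : (AddSubgroup.closure (Set.range g)).FG :=
    ⟨(Set.finite_range g).toFinset, by rw [Set.Finite.coe_toFinset]⟩
  obtain ⟨nn, a, P, hadd, heval⟩ := hf (AddSubgroup.closure (Set.range g)) hFG
  refine ⟨fun _ => P.totalDegree, ?_⟩
  intro i x hx
  have hgi : g i ∈ AddSubgroup.closure (Set.range g) := AddSubgroup.subset_closure ⟨i, rfl⟩
  rw [fdiff_iterate_restrict (P.totalDegree + 1) f (g i) hgi x hx]
  rw [show (fun y : AddSubgroup.closure (Set.range g) => f ↑y)
      = fun y : AddSubgroup.closure (Set.range g) => eval (fun j => a j y) P from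
    funext fun y => heval y]
  exact fdiff_iterate_eval a hadd P.totalDegree P le_rfl _ _

lemma reverse_dir {G : Type*} [AddCommGroup G] (f : G → ℂ)
    (hyp : ∀ t : ℕ, 0 < t → ∀ g : Fin t → G, ∃ n : Fin t → ℕ, ∀ i : Fin t,
        ∀ x ∈ AddSubgroup.closure (Set.range g), (fdiff (g i))^[n i + 1] f x = 0) :
    IsLocalPolynomial f := by
  intro H hFG
  obtain ⟨S, hS⟩ := hFG
  set T := S.card + 1 with hT
  set g : Fin T → G := Fin.cons 0 (fun i => (S.equivFin.symm i : G)) with hg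
  have hrange : Set.range (fun i : Fin S.card => (S.equivFin.symm i : G)) = ↑S := by
    ext x
    constructor
    · rintro ⟨i, rfl⟩
      exact (S.equivFin.symm i).2
    · intro hx
      exact ⟨S.equivFin ⟨x, hx⟩, by simp⟩
  have hrangeg : Set.range g = insert 0 ↑S := by
    rw [hg, ← hrange]
    ext x
    constructor
    · rintro ⟨i, rfl⟩
      refine Fin.cases ?_ ?_ i
      · left; rfl
      · intro j
        right
        exact ⟨j, rfl⟩
    · rintro (rfl | ⟨j, rfl⟩)
      · exact ⟨0, rfl⟩
      · exact ⟨j.succ, rfl⟩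
  have hcl : AddSubgroup.closure (Set.range g) = H := by
    rw [hrangeg, ← hS]
    refine le_antisymm ?_ (AddSubgroup.closure_mono (Set.subset_insert _ _))
    rw [AddSubgroup.closure_le]
    intro x hx
    rcases hx with rfl | hx
    · exact AddSubgroup.zero_mem _
    · exact AddSubgroup.subset_closure hx
  obtain ⟨n, hn⟩ := hyp T (Nat.succ_pos _) g
  obtain ⟨P, hP⟩ := reverse_main T f g n hn
  have hrep : ∀ x : G, x ∈ H → ∃ k : Fin T → ℤ, ∑ i, k i • g i = x := by
    intro x hx
    have hx' : x ∈ Submodule.span ℤ (Set.range g) := by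
      have : x ∈ (Submodule.span ℤ (Set.range g)).toAddSubgroup := by
        rw [Submodule.span_int_eq_addSubgroupClosure, hcl]
        exact hx
      exact this
    exact (Submodule.mem_span_range_iff_exists_fun ℤ).1 hx' |>.imp fun c hc => hc
  choose sec hsec using fun x : H => hrep ↑x x.2
  set Kc : Set (Fin T → ℂ) :=
    {w | ∃ m : Fin T → ℤ, (∑ i, m i • g i) = 0 ∧ w = fun i => (m i : ℂ)} with hKc
  have hKinv : ∀ w ∈ Kc, ∀ z : Fin T → ℂ, eval (fun i => z i + w i) P = eval z P := by
    rintro w ⟨m, hm, rfl⟩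
    apply step1 P m
    intro k
    rw [← hP k, ← hP (fun i => k i + m i)]
    congr 1
    have e : ∑ i, (k i + m i) • g i = (∑ i, k i • g i) + ∑ i, m i • g i := by
      rw [← Finset.sum_add_distrib]
      exact Finset.sum_congr rfl fun i _ => add_zsmul _ _ _
    rw [e, hm, add_zero]
  have hspan : ∀ w ∈ Submodule.span ℂ Kc, ∀ z : Fin T → ℂ,
      eval (fun i => z i + w i) P = eval z P := by
    intro w hw
    induction hw using Submodule.span_induction with
    | mem w hwmem => exact hKinv w hwmem
    | zero => intro z; simp
    | add u v _ _ hu hv =>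
      intro z
      have e : (fun i => z i + (u + v) i) = fun i => (fun i => z i + u i) i + v i := by
        funext i
        simp
        ring
      rw [e, hv, hu]
    | smul c u _ hu =>
      intro z
      have e : (fun i => z i + (c • u) i) = fun i => z i + c * u i := by
        funext i
        simp
      rw [e]
      exact invariant_smul P u hu c z
  obtain ⟨W', hW'⟩ := Submodule.exists_isCompl (Submodule.span ℂ Kc)
  set pr : (Fin T → ℂ) →ₗ[ℂ] (Fin T → ℂ) :=
    W'.subtype ∘ₗ (Submodule.projectionOnto W' (Submodule.span ℂ Kc) hW'.symm) with hpr
  have hprW : ∀ w ∈ Submodule.span ℂ Kc, pr w = 0 := by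
    intro w hw
    rw [hpr]
    simp [Submodule.projectionOnto_apply_of_mem_right hW'.symm hw]
  have hprdiff : ∀ z : Fin T → ℂ, z - pr z ∈ Submodule.span ℂ Kc := by
    intro z
    have hz : z ∈ (Submodule.span ℂ Kc) ⊔ W' := by
      rw [hW'.sup_eq_top]
      trivial
    obtain ⟨w, hw, w', hw', rfl⟩ := Submodule.mem_sup.1 hz
    have hpw' : pr w' = w' := by
      rw [hpr]
      have := Submodule.projectionOnto_apply_left hW'.symm ⟨w', hw'⟩
      simp only [LinearMap.comp_apply]
      rw [this]
      rfl
    have : pr (w + w') = w' := by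
      rw [map_add, hprW w hw, zero_add, hpw']
    rw [this]
    simpa using hw
  refine ⟨T, fun j x => pr (fun i => (sec x i : ℂ)) j, P, ?_, ?_⟩
  · intro j x y
    have hm : (∑ i, (sec (x + y) i - sec x i - sec y i) • g i) = 0 := by
      have e : ∀ i : Fin T, (sec (x + y) i - sec x i - sec y i) • g i
          = sec (x + y) i • g i - sec x i • g i - sec y i • g i := by
        intro i
        rw [sub_zsmul, sub_zsmul]
        abel
      rw [Finset.sum_congr rfl fun i _ => e i]
      rw [Finset.sum_sub_distrib, Finset.sum_sub_distrib, hsec, hsec, hsec]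
      push_cast
      abel
    have hKcmem : (fun i => ((sec (x + y) i - sec x i - sec y i : ℤ) : ℂ)) ∈ Kc :=
      ⟨_, hm, rfl⟩
    have h0 := hprW _ (Submodule.subset_span hKcmem)
    have e2 : (fun i => ((sec (x + y) i : ℤ) : ℂ))
        = (fun i => ((sec x i : ℤ) : ℂ)) + (fun i => ((sec y i : ℤ) : ℂ))
          + fun i => ((sec (x + y) i - sec x i - sec y i : ℤ) : ℂ) := by
      funext i
      push_cast
      simp only [Pi.add_apply]
      push_cast
      ring
    show pr (fun i => ((sec (x + y) i : ℤ) : ℂ)) j = _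
    rw [e2, map_add, map_add, h0, add_zero]
    rfl
  · intro x
    have h1 : f ↑x = eval (fun i => ((sec x i : ℤ) : ℂ)) P := by
      rw [← hsec x]
      exact hP (sec x)
    have h2 := hspan _ (hprdiff (fun i => ((sec x i : ℤ) : ℂ)))
      (pr (fun i => ((sec x i : ℤ) : ℂ)))
    have h3 : (fun i => pr (fun i => ((sec x i : ℤ) : ℂ)) i
          + ((fun i => ((sec x i : ℤ) : ℂ)) - pr (fun i => ((sec x i : ℤ) : ℂ))) i)
        = fun i => ((sec x i : ℤ) : ℂ) := by
      funext i
      simp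
    rw [h3] at h2
    show f ↑x = eval (fun i => pr (fun i => ((sec x i : ℤ) : ℂ)) i) P
    rw [h1, ← h2]

theorem localPolynomial_iff {G : Type*} [AddCommGroup G] (f : G → ℂ) :
    IsLocalPolynomial f ↔
      ∀ t : ℕ, 0 < t → ∀ g : Fin t → G, ∃ n : Fin t → ℕ, ∀ i : Fin t,
        ∀ x ∈ AddSubgroup.closure (Set.range g), (fdiff (g i))^[n i + 1] f x = 0 :=
  ⟨fun h => forward_dir f h, fun h => reverse_dir f h⟩
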